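/- arXiv:2601.19200 — 8 statements merged into one kernel-verified Lean document; each statement's English description precedes it below -/
import Mathlib

section
/- Let A be an algebra over a field F of characteristic zero and Ω = {Ω_i}_{i=0}^∞ a higher derivation on A. Then there exists a sequence {δ_n}_{n=1}^∞ of ordinary F-linear derivations on A such that (n+1)·Ω_{n+1} = Σ_{k=0}^n δ_{k+1} ∘ Ω_{n-k} for every n ≥ 0. -/
open Finset

section Aux
variable {F A : Type*} [Field F] [CharZero F] [Ring A] [Algebra F A]

noncomputable def hdDelta (Ω : ℕ → A →ₗ[F] A) : ℕ → A →ₗ[F] A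
  | 0 => 0
  | (n+1) => (n+1) • Ω (n+1) -
      ∑ k ∈ (Finset.range n).attach, (hdDelta Ω (k.1+1)).comp (Ω (n-k.1))
  decreasing_by exact Nat.succ_lt_succ (Finset.mem_range.mp k.2)

lemma hdDelta_succ (Ω : ℕ → A →ₗ[F] A) (n : ℕ) :
    hdDelta Ω (n+1) = (n+1) • Ω (n+1) -
      ∑ k ∈ Finset.range n, (hdDelta Ω (k+1)).comp (Ω (n-k)) := by
  rw [hdDelta, Finset.sum_attach (Finset.range n)
    (fun k => (hdDelta Ω (k+1)).comp (Ω (n-k)))]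

lemma hdKey (Ω : ℕ → A →ₗ[F] A) (h0 : Ω 0 = LinearMap.id) (n : ℕ) :
    (n+1) • Ω (n+1) = ∑ k ∈ Finset.range (n+1), (hdDelta Ω (k+1)).comp (Ω (n-k)) := by
  rw [Finset.sum_range_succ, Nat.sub_self, h0, hdDelta_succ]
  simp only [LinearMap.comp_id]
  abel

lemma hdDelta_deriv (Ω : ℕ → A →ₗ[F] A) (h0 : Ω 0 = LinearMap.id)
    (hmul : ∀ k a b, Ω k (a * b) = ∑ i ∈ Finset.range (k + 1), Ω i a * Ω (k - i) b)
    (n : ℕ) (a b : A) :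
    hdDelta Ω (n+1) (a*b) = hdDelta Ω (n+1) a * b + a * hdDelta Ω (n+1) b := by
  induction n using Nat.strong_induction_on generalizing a b with
  | _ n IH =>
  have key : ∀ (m : ℕ) (x : A),
      (m+1) • (Ω (m+1) x) = ∑ j ∈ range (m+1), hdDelta Ω (j+1) (Ω (m-j) x) := by
    intro m x
    have := LinearMap.congr_fun (hdKey Ω h0 m) x
    simpa only [LinearMap.smul_apply, LinearMap.coe_sum, Finset.sum_apply,
      LinearMap.comp_apply] using this
  have hd : hdDelta Ω (n+1) (a*b) = (n+1) • (Ω (n+1) (a*b))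
      - ∑ k ∈ range n, hdDelta Ω (k+1) (Ω (n-k) (a*b)) := by
    have := LinearMap.congr_fun (hdDelta_succ Ω n) (a*b)
    simpa only [LinearMap.sub_apply, LinearMap.smul_apply, LinearMap.coe_sum,
      Finset.sum_apply, LinearMap.comp_apply] using this
  have E1 : (n+1) • (Ω (n+1) (a*b))
      = (∑ i ∈ range (n+2), (i • Ω i a) * Ω (n+1-i) b)
      + (∑ i ∈ range (n+2), Ω i a * ((n+1-i) • Ω (n+1-i) b)) := by
    rw [hmul (n+1) a b, smul_sum, ← Finset.sum_add_distrib]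
    refine Finset.sum_congr rfl fun i hi => ?_
    have hi' : i + (n+1-i) = n+1 := by
      have := Finset.mem_range.mp hi; omega
    calc (n+1) • (Ω i a * Ω (n+1-i) b)
        = (i + (n+1-i)) • (Ω i a * Ω (n+1-i) b) := by rw [hi']
      _ = i • (Ω i a * Ω (n+1-i) b) + (n+1-i) • (Ω i a * Ω (n+1-i) b) := add_smul _ _ _
      _ = (i • Ω i a) * Ω (n+1-i) b + Ω i a * ((n+1-i) • Ω (n+1-i) b) := by
          rw [smul_mul_assoc, mul_smul_comm]
  have E2 : ∑ k ∈ range n, hdDelta Ω (k+1) (Ω (n-k) (a*b))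
      = (∑ k ∈ range n, ∑ i ∈ range (n-k+1), hdDelta Ω (k+1) (Ω i a) * Ω (n-k-i) b)
      + (∑ k ∈ range n, ∑ i ∈ range (n-k+1), Ω i a * hdDelta Ω (k+1) (Ω (n-k-i) b)) := by
    rw [← Finset.sum_add_distrib]
    refine Finset.sum_congr rfl fun k hk => ?_
    have hk' := Finset.mem_range.mp hk
    rw [hmul (n-k) a b, map_sum, ← Finset.sum_add_distrib]
    exact Finset.sum_congr rfl fun i _ => IH k hk' _ _
  have C1 : (∑ i ∈ range (n+2), (i • Ω i a) * Ω (n+1-i) b)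
      = hdDelta Ω (n+1) a * b
      + ∑ k ∈ range n, ∑ i ∈ range (n-k+1), hdDelta Ω (k+1) (Ω i a) * Ω (n-k-i) b := by
    rw [Finset.sum_range_succ']
    simp only [zero_smul, zero_mul, add_zero]
    have step1 : ∀ p ∈ range (n+1),
        ((p+1) • Ω (p+1) a) * Ω (n+1-(p+1)) b
        = ∑ j ∈ range (p+1), hdDelta Ω (j+1) (Ω (p-j) a) * Ω (n-j-(p-j)) b := by
      intro p hp
      have hp' := Finset.mem_range.mp hp
      rw [key p a, Finset.sum_mul]
      refine Finset.sum_congr rfl fun j hj => ?_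
      have hj' := Finset.mem_range.mp hj
      have h : n - j - (p - j) = n + 1 - (p+1) := by omega
      rw [h]
    rw [Finset.sum_congr rfl step1,
      Finset.sum_range_diag_flip (n+1) (fun k q => hdDelta Ω (k+1) (Ω q a) * Ω (n-k-q) b),
      Finset.sum_range_succ]
    have hnn : n + 1 - n = 1 := by omega
    rw [hnn, Finset.sum_range_one, add_comm]
    congr 1
    · simp [h0]
    · refine Finset.sum_congr rfl fun m hm => ?_
      have hm' := Finset.mem_range.mp hm
      have h : n + 1 - m = n - m + 1 := by omega
      rw [h]
  have C2 : (∑ i ∈ range (n+2), Ω i a * ((n+1-i) • Ω (n+1-i) b))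
      = a * hdDelta Ω (n+1) b
      + ∑ k ∈ range n, ∑ i ∈ range (n-k+1), Ω i a * hdDelta Ω (k+1) (Ω (n-k-i) b) := by
    rw [← Finset.sum_range_reflect (fun i => Ω i a * ((n+1-i) • Ω (n+1-i) b)) (n+2)]
    have refl1 : ∀ i ∈ range (n+2),
        Ω (n+2-1-i) a * ((n+1-(n+2-1-i)) • Ω (n+1-(n+2-1-i)) b)
        = Ω (n+1-i) a * (i • Ω i b) := by
      intro i hi
      have hi' := Finset.mem_range.mp hi
      have h1 : n + 2 - 1 - i = n + 1 - i := by omega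
      have h2 : n + 1 - (n+1-i) = i := by omega
      rw [h1, h2]
    rw [Finset.sum_congr rfl refl1, Finset.sum_range_succ']
    simp only [zero_smul, mul_zero, add_zero]
    have step1 : ∀ p ∈ range (n+1),
        Ω (n+1-(p+1)) a * ((p+1) • Ω (p+1) b)
        = ∑ j ∈ range (p+1), Ω (n-j-(p-j)) a * hdDelta Ω (j+1) (Ω (p-j) b) := by
      intro p hp
      have hp' := Finset.mem_range.mp hp
      rw [key p b, Finset.mul_sum]
      refine Finset.sum_congr rfl fun j hj => ?_
      have hj' := Finset.mem_range.mp hj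
      have h : n - j - (p - j) = n + 1 - (p+1) := by omega
      rw [h]
    rw [Finset.sum_congr rfl step1,
      Finset.sum_range_diag_flip (n+1) (fun k q => Ω (n-k-q) a * hdDelta Ω (k+1) (Ω q b)),
      Finset.sum_range_succ]
    have hnn : n + 1 - n = 1 := by omega
    rw [hnn, Finset.sum_range_one, add_comm]
    congr 1
    · simp [h0]
    · refine Finset.sum_congr rfl fun m hm => ?_
      have hm' := Finset.mem_range.mp hm
      have h : n + 1 - m = n - m + 1 := by omega
      rw [h, ← Finset.sum_range_reflect
        (fun i => Ω i a * hdDelta Ω (m+1) (Ω (n-m-i) b)) (n-m+1)]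
      refine Finset.sum_congr rfl fun j hj => ?_
      have hj' := Finset.mem_range.mp hj
      have h3 : n - m + 1 - 1 - j = n - m - j := by omega
      have h4 : n - m - (n - m - j) = j := by omega
      rw [h3, h4]
  rw [hd, E1, E2, C1, C2]
  abel

end Aux

/-- Any higher derivation `Ω` on an algebra `A` over a field of characteristic zero
is determined by a sequence of ordinary derivations `δ` via
`(n+1) • Ω (n+1) = ∑_{k=0}^{n} δ (k+1) ∘ Ω (n-k)`. -/
theorem stmt_1 {F A : Type*} [Field F] [CharZero F] [Ring A] [Algebra F A]
    (Ω : ℕ → A →ₗ[F] A)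
    (h0 : Ω 0 = LinearMap.id)
    (hmul : ∀ k a b, Ω k (a * b) = ∑ i ∈ Finset.range (k + 1), Ω i a * Ω (k - i) b) :
    ∃ δ : ℕ → A →ₗ[F] A,
      (∀ n, 1 ≤ n → ∀ a b : A, δ n (a * b) = δ n a * b + a * δ n b) ∧
      (∀ n : ℕ, (n + 1) • Ω (n + 1) =
        ∑ k ∈ Finset.range (n + 1), (δ (k + 1)).comp (Ω (n - k))) := by
  refine ⟨hdDelta Ω, ?_, fun n => hdKey Ω h0 n⟩
  rintro (_|m) hn a b
  · omega
  · exact hdDelta_deriv Ω h0 hmul m a b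
end

section
/- Conversely, given a sequence {δ_n}_{n=1}^∞ of ordinary derivations on an algebra A over a field of characteristic zero, the family Ω defined recursively by Ω_0 = id and (n+1)·Ω_{n+1} = Σ_{k=0}^n δ_{k+1} ∘ Ω_{n-k} is a higher derivation on A. -/
open Finset

/-- Triangle reindexing: sum over anti-diagonals equals sum over rows. -/
private lemma tri_aux {M : Type*} [AddCommMonoid M] (n : ℕ) (f : ℕ → ℕ → M) :
    ∑ j ∈ range (n + 1), ∑ k ∈ range (j + 1), f k (j - k)
      = ∑ k ∈ range (n + 1), ∑ i ∈ range (n + 1 - k), f k i := by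
  rw [Finset.sum_sigma', Finset.sum_sigma']
  refine sum_nbij' (fun x => ⟨x.2, x.1 - x.2⟩) (fun x => ⟨x.1 + x.2, x.1⟩) ?_ ?_ ?_ ?_ ?_
  · rintro ⟨a, b⟩ h
    simp only [mem_sigma, mem_range] at h ⊢
    omega
  · rintro ⟨a, b⟩ h
    simp only [mem_sigma, mem_range] at h ⊢
    omega
  · rintro ⟨a, b⟩ h
    simp only [mem_sigma, mem_range] at h
    dsimp only
    rw [show b + (a - b) = a from by omega]
  · rintro ⟨a, b⟩ h
    simp only [mem_sigma, mem_range] at h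
    dsimp only
    rw [show a + b - a = b from by omega]
  · rintro ⟨a, b⟩ h
    rfl

/-- Swapping the order of a triangular double sum. -/
private lemma tri_swap {M : Type*} [AddCommMonoid M] (n : ℕ) (f : ℕ → ℕ → M) :
    ∑ j ∈ range (n + 1), ∑ k ∈ range (n + 1 - j), f j k
      = ∑ k ∈ range (n + 1), ∑ j ∈ range (n + 1 - k), f j k := by
  rw [Finset.sum_sigma', Finset.sum_sigma']
  refine sum_nbij' (fun x => ⟨x.2, x.1⟩) (fun x => ⟨x.2, x.1⟩) ?_ ?_ ?_ ?_ ?_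
  · rintro ⟨a, b⟩ h
    simp only [mem_sigma, mem_range] at h ⊢
    omega
  · rintro ⟨a, b⟩ h
    simp only [mem_sigma, mem_range] at h ⊢
    omega
  · rintro ⟨a, b⟩ h
    rfl
  · rintro ⟨a, b⟩ h
    rfl
  · rintro ⟨a, b⟩ h
    rfl

/-- Conversely, given a sequence `δ` of ordinary derivations on an algebra over a field of
characteristic zero, the family `Ω` defined recursively by `Ω 0 = id` and
`(n+1) • Ω (n+1) = ∑_{k=0}^{n} δ (k+1) ∘ Ω (n-k)` is a higher derivation. -/
theorem stmt_2 {F A : Type*} [Field F] [CharZero F] [Ring A] [Algebra F A]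
    (δ : ℕ → A →ₗ[F] A)
    (hδ : ∀ n, 1 ≤ n → ∀ a b : A, δ n (a * b) = δ n a * b + a * δ n b)
    (Ω : ℕ → A →ₗ[F] A)
    (h0 : Ω 0 = LinearMap.id)
    (hrec : ∀ n : ℕ, (n + 1) • Ω (n + 1) =
      ∑ k ∈ Finset.range (n + 1), (δ (k + 1)).comp (Ω (n - k))) :
    ∀ k : ℕ, ∀ a b : A, Ω k (a * b) = ∑ i ∈ Finset.range (k + 1), Ω i a * Ω (k - i) b := by
  -- pointwise version of the recursion, valid for all m (including m = 0)
  have hrec' : ∀ m : ℕ, ∀ x : A,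
      m • Ω m x = ∑ k ∈ range m, δ (k + 1) (Ω (m - 1 - k) x) := by
    intro m x
    cases m with
    | zero => simp
    | succ n =>
      rw [← LinearMap.smul_apply, hrec n]
      simp only [LinearMap.coe_sum, Finset.sum_apply, LinearMap.comp_apply,
        Nat.add_sub_cancel]
  -- cancellation of positive natural scalars
  have cancel : ∀ (m : ℕ) (x y : A), (m + 1) • x = (m + 1) • y → x = y := by
    intro m x y h
    rw [← Nat.cast_smul_eq_nsmul F, ← Nat.cast_smul_eq_nsmul F] at h
    exact smul_right_injective A (Nat.cast_ne_zero.mpr (Nat.succ_ne_zero m)) h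
  intro k
  induction k using Nat.strong_induction_on with
  | _ k ih =>
    intro a b
    cases k with
    | zero => simp [h0]
    | succ n =>
      apply cancel n
      -- LHS computation
      have L : (n + 1) • Ω (n + 1) (a * b)
          = ∑ k ∈ range (n + 1), ∑ i ∈ range (n + 1 - k),
              (δ (k + 1) (Ω i a) * Ω (n - k - i) b + Ω i a * δ (k + 1) (Ω (n - k - i) b)) := by
        rw [hrec' (n + 1) (a * b)]
        refine Finset.sum_congr rfl fun k hk => ?_
        rw [Finset.mem_range] at hk
        have h1 : n + 1 - 1 - k = n - k := by omega
        rw [h1, ih (n - k) (by omega) a b, map_sum]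
        have h2 : n - k + 1 = n + 1 - k := by omega
        rw [h2]
        refine Finset.sum_congr rfl fun i hi => ?_
        exact hδ (k + 1) (by omega) _ _
      rw [L]
      simp only [Finset.sum_add_distrib]
      -- RHS computation
      rw [Finset.smul_sum]
      have R : ∀ j ∈ range (n + 1 + 1),
          (n + 1) • (Ω j a * Ω (n + 1 - j) b)
            = (∑ k ∈ range j, δ (k + 1) (Ω (j - 1 - k) a)) * Ω (n + 1 - j) b
              + Ω j a * ∑ k ∈ range (n + 1 - j), δ (k + 1) (Ω (n + 1 - j - 1 - k) b) := by
        intro j hj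
        rw [Finset.mem_range] at hj
        have hsplit : (n + 1) • (Ω j a * Ω (n + 1 - j) b)
            = (j • Ω j a) * Ω (n + 1 - j) b + Ω j a * ((n + 1 - j) • Ω (n + 1 - j) b) := by
          rw [smul_mul_assoc, mul_smul_comm, ← add_smul]
          congr 1
          omega
        rw [hsplit, hrec' j a, hrec' (n + 1 - j) b]
      rw [Finset.sum_congr rfl R, Finset.sum_add_distrib]
      congr 1
      -- first piece
      · rw [Finset.sum_range_succ' (fun j => (∑ k ∈ range j, δ (k + 1) (Ω (j - 1 - k) a))
            * Ω (n + 1 - j) b)]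
        simp only [Finset.range_zero, Finset.sum_empty, zero_mul, add_zero]
        rw [← tri_aux n (fun k i => δ (k + 1) (Ω i a) * Ω (n - k - i) b)]
        refine Finset.sum_congr rfl fun j hj => ?_
        rw [Finset.mem_range] at hj
        rw [Finset.sum_mul]
        refine Finset.sum_congr rfl fun k hk => ?_
        rw [Finset.mem_range] at hk
        have e1 : j + 1 - 1 - k = j - k := by omega
        have e2 : n + 1 - (j + 1) = n - k - (j - k) := by omega
        rw [e1, e2]
      -- second piece
      · rw [← tri_swap n (fun i k => Ω i a * δ (k + 1) (Ω (n - k - i) b))]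
        have hT2 : ∑ j ∈ range (n + 1 + 1),
              Ω j a * ∑ k ∈ range (n + 1 - j), δ (k + 1) (Ω (n + 1 - j - 1 - k) b)
            = ∑ j ∈ range (n + 1),
              Ω j a * ∑ k ∈ range (n + 1 - j), δ (k + 1) (Ω (n + 1 - j - 1 - k) b) := by
          rw [Finset.sum_range_succ]
          simp
        rw [hT2]
        refine Finset.sum_congr rfl fun j hj => ?_
        rw [Finset.mem_range] at hj
        rw [Finset.mul_sum]
        refine Finset.sum_congr rfl fun k hk => ?_
        rw [Finset.mem_range] at hk
        have e1 : n + 1 - j - 1 - k = n - k - j := by omega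
        rw [e1]
end

section
/- Let A be an algebra over a field F of characteristic zero, Ω a higher derivation on A determined by ordinary derivations {δ_i}_{i=1}^∞ (via (n+1)Ω_{n+1} = Σ_{k=0}^n δ_{k+1}∘Ω_{n-k}), M an A-module, and Ψ a higher Ω-derivation on M. Then there exists a sequence {d_i : M → M}_{i=1}^∞ of ordinary δ_i-derivations on M such that (n+1)·Ψ_{n+1} = Σ_{k=0}^n d_{k+1} ∘ Ψ_{n-k} for all n ≥ 0. -/
open Finset

lemma triSum {β : Type*} [AddCommMonoid β] (f : ℕ → ℕ → β) (n : ℕ) :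
    ∑ k ∈ range (n+1), ∑ i ∈ range (n+1-k), f k i
      = ∑ s ∈ range (n+1), ∑ k ∈ range (s+1), f k (s-k) := by
  induction n with
  | zero => simp
  | succ n ih =>
    have h1 : ∑ k ∈ range (n+2), ∑ i ∈ range (n+2-k), f k i
        = (∑ k ∈ range (n+2), ∑ i ∈ range (n+1-k), f k i)
          + ∑ k ∈ range (n+2), f k (n+1-k) := by
      rw [← Finset.sum_add_distrib]
      refine Finset.sum_congr rfl fun k hk => ?_
      have hb : n + 2 - k = (n + 1 - k) + 1 := by
        have := Nat.lt_succ_iff.mp (Finset.mem_range.mp hk); omega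
      rw [hb, Finset.sum_range_succ]
    have h2 : ∑ k ∈ range (n+2), ∑ i ∈ range (n+1-k), f k i
        = ∑ k ∈ range (n+1), ∑ i ∈ range (n+1-k), f k i := by
      rw [Finset.sum_range_succ]; simp
    rw [h1, h2, ih]
    conv_rhs => rw [Finset.sum_range_succ]

lemma triSwap {β : Type*} [AddCommMonoid β] (f : ℕ → ℕ → β) (n : ℕ) :
    ∑ k ∈ range (n+1), ∑ i ∈ range (n+1-k), f k i
      = ∑ i ∈ range (n+1), ∑ k ∈ range (n+1-i), f k i := by
  rw [triSum, triSum (fun i k => f k i)]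
  refine Finset.sum_congr rfl fun s _ => ?_
  rw [← Finset.sum_range_reflect]
  refine Finset.sum_congr rfl fun k hk => ?_
  have hk' : k ≤ s := Nat.lt_succ_iff.mp (Finset.mem_range.mp hk)
  have : s + 1 - 1 - k = s - k := by omega
  rw [this, Nat.sub_sub_self hk']

/-- The recursively defined sequence of ordinary derivations on `M`. -/
def dA {M : Type*} [AddCommGroup M] (Ψ : ℕ → M → M) : ℕ → M → M
  | 0 => fun _ => 0
  | n + 1 => fun m => (n + 1) • Ψ (n + 1) m -
      ∑ k ∈ (Finset.range n).attach, dA Ψ (k.1 + 1) (Ψ (n - k.1) m)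
  termination_by n => n
  decreasing_by exact Nat.succ_lt_succ (Finset.mem_range.mp k.2)

lemma dA_succ {M : Type*} [AddCommGroup M] (Ψ : ℕ → M → M) (n : ℕ) (m : M) :
    dA Ψ (n+1) m = (n+1) • Ψ (n+1) m - ∑ k ∈ range n, dA Ψ (k+1) (Ψ (n-k) m) := by
  rw [dA]
  dsimp only
  congr 1
  exact Finset.sum_attach _ (fun k => dA Ψ (k+1) (Ψ (n-k) m))

lemma dA_rec {M : Type*} [AddCommGroup M] (Ψ : ℕ → M → M) (hΨ0 : ∀ m, Ψ 0 m = m)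
    (n : ℕ) (m : M) :
    ∑ k ∈ range (n+1), dA Ψ (k+1) (Ψ (n-k) m) = (n+1) • Ψ (n+1) m := by
  rw [Finset.sum_range_succ, Nat.sub_self, hΨ0, dA_succ]
  abel

lemma dA_add {M : Type*} [AddCommGroup M] (Ψ : ℕ → M → M)
    (hΨadd : ∀ k m m', Ψ k (m + m') = Ψ k m + Ψ k m') (n : ℕ) :
    ∀ m m', dA Ψ (n+1) (m + m') = dA Ψ (n+1) m + dA Ψ (n+1) m' := by
  induction n using Nat.strong_induction_on with
  | _ n ih =>
    intro m m'
    rw [dA_succ, dA_succ, dA_succ, hΨadd, smul_add]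
    rw [show (∑ k ∈ range n, dA Ψ (k+1) (Ψ (n-k) (m+m')))
        = ∑ k ∈ range n, (dA Ψ (k+1) (Ψ (n-k) m) + dA Ψ (k+1) (Ψ (n-k) m')) from
      Finset.sum_congr rfl fun k hk => by
        rw [hΨadd, ih k (Finset.mem_range.mp hk)], Finset.sum_add_distrib]
    abel

lemma dA_smul {A M : Type*} [Ring A] [AddCommGroup M] [Module A M]
    (Ω δ : ℕ → A → A)
    (hΩ0 : ∀ a, Ω 0 a = a)
    (hrec : ∀ (n : ℕ) (a : A),
      (n + 1) • Ω (n + 1) a = ∑ k ∈ range (n + 1), δ (k + 1) (Ω (n - k) a))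
    (Ψ : ℕ → M → M)
    (hΨadd : ∀ k m m', Ψ k (m + m') = Ψ k m + Ψ k m')
    (hΨ0 : ∀ m, Ψ 0 m = m)
    (hΨ : ∀ k (a : A) (m : M),
      Ψ k (a • m) = ∑ i ∈ range (k + 1), Ω i a • Ψ (k - i) m) (n : ℕ) :
    ∀ (a : A) (m : M),
      dA Ψ (n+1) (a • m) = a • dA Ψ (n+1) m + δ (n+1) a • m := by
  induction n using Nat.strong_induction_on with
  | _ n ih =>
  intro a m
  -- expansion of `dA (k+1) (Ψ (n-k) (a • m))` for `k < n`
  have hinner : ∀ k, k < n → dA Ψ (k+1) (Ψ (n-k) (a • m)) =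
      ∑ i ∈ range (n+1-k),
        (Ω i a • dA Ψ (k+1) (Ψ (n-k-i) m) + δ (k+1) (Ω i a) • Ψ (n-k-i) m) := by
    intro k hk
    have hb : n - k + 1 = n + 1 - k := by omega
    rw [hΨ (n-k) a m, hb]
    refine Eq.trans (map_sum (AddMonoidHom.mk' (dA Ψ (k+1)) (dA_add Ψ hΨadd k))
      (fun i => Ω i a • Ψ (n-k-i) m) (range (n+1-k))) ?_
    exact Finset.sum_congr rfl fun i _ => ih k hk (Ω i a) (Ψ (n-k-i) m)
  -- the key claim
  have claim : (n+1) • Ψ (n+1) (a • m) =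
      ∑ k ∈ range (n+1), ∑ i ∈ range (n+1-k),
        (Ω i a • dA Ψ (k+1) (Ψ (n-k-i) m) + δ (k+1) (Ω i a) • Ψ (n-k-i) m) := by
    have hS1 : ∑ k ∈ range (n+1), ∑ i ∈ range (n+1-k),
          Ω i a • dA Ψ (k+1) (Ψ (n-k-i) m)
        = ∑ i ∈ range (n+2), (n+1-i) • (Ω i a • Ψ (n+1-i) m) := by
      rw [triSwap]
      rw [Finset.sum_range_succ (n := n+1)]
      have hz : (n+1-(n+1)) • (Ω (n+1) a • Ψ (n+1-(n+1)) m) = 0 := by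
        rw [Nat.sub_self, zero_smul]
      rw [hz, add_zero]
      refine Finset.sum_congr rfl fun i hi => ?_
      have hi' : i ≤ n := Nat.lt_succ_iff.mp (Finset.mem_range.mp hi)
      have hb1 : n + 1 - i = (n - i) + 1 := by omega
      have hsum : ∑ k ∈ range (n+1-i), Ω i a • dA Ψ (k+1) (Ψ (n-k-i) m)
          = Ω i a • ∑ k ∈ range ((n-i)+1), dA Ψ (k+1) (Ψ ((n-i)-k) m) := by
        rw [Finset.smul_sum, hb1]
        refine Finset.sum_congr rfl fun k _ => ?_
        have : n - k - i = n - i - k := by omega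
        rw [this]
      rw [hsum, dA_rec Ψ hΨ0 (n-i) m, hb1, smul_comm]
    have hS2 : ∑ k ∈ range (n+1), ∑ i ∈ range (n+1-k),
          δ (k+1) (Ω i a) • Ψ (n-k-i) m
        = ∑ s ∈ range (n+1), ((s+1) • Ω (s+1) a) • Ψ (n-s) m := by
      rw [triSum]
      refine Finset.sum_congr rfl fun s hs => ?_
      have hs' : s ≤ n := Nat.lt_succ_iff.mp (Finset.mem_range.mp hs)
      calc ∑ k ∈ range (s+1), δ (k+1) (Ω (s-k) a) • Ψ (n-k-(s-k)) m
          = ∑ k ∈ range (s+1), δ (k+1) (Ω (s-k) a) • Ψ (n-s) m := by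
            refine Finset.sum_congr rfl fun k hk => ?_
            have hk' : k ≤ s := Nat.lt_succ_iff.mp (Finset.mem_range.mp hk)
            have : n - k - (s-k) = n - s := by omega
            rw [this]
        _ = (∑ k ∈ range (s+1), δ (k+1) (Ω (s-k) a)) • Ψ (n-s) m :=
            (Finset.sum_smul).symm
        _ = ((s+1) • Ω (s+1) a) • Ψ (n-s) m := by rw [← hrec s a]
    have hsplit : ∑ k ∈ range (n+1), ∑ i ∈ range (n+1-k),
          (Ω i a • dA Ψ (k+1) (Ψ (n-k-i) m) + δ (k+1) (Ω i a) • Ψ (n-k-i) m)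
        = (∑ k ∈ range (n+1), ∑ i ∈ range (n+1-k), Ω i a • dA Ψ (k+1) (Ψ (n-k-i) m))
          + ∑ k ∈ range (n+1), ∑ i ∈ range (n+1-k), δ (k+1) (Ω i a) • Ψ (n-k-i) m := by
      rw [← Finset.sum_add_distrib]
      exact Finset.sum_congr rfl fun k _ => Finset.sum_add_distrib
    rw [hsplit, hS1, hS2]
    have hS2' : ∑ s ∈ range (n+1), ((s+1) • Ω (s+1) a) • Ψ (n-s) m
        = ∑ i ∈ range (n+2), i • (Ω i a • Ψ (n+1-i) m) := by
      rw [Finset.sum_range_succ' (fun i => i • (Ω i a • Ψ (n+1-i) m)) (n+1)]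
      simp only [zero_smul, add_zero, Nat.succ_sub_succ]
      exact Finset.sum_congr rfl fun s _ => smul_assoc _ _ _
    rw [hS2', hΨ (n+1) a m, Finset.smul_sum, ← Finset.sum_add_distrib]
    refine Finset.sum_congr rfl fun i hi => ?_
    have hi' : i ≤ n + 1 := Nat.lt_succ_iff.mp (Finset.mem_range.mp hi)
    rw [← add_nsmul]
    congr 1
    omega
  -- conclude
  rw [dA_succ]
  have hsum : ∑ k ∈ range n, dA Ψ (k+1) (Ψ (n-k) (a • m))
      = ∑ k ∈ range n, ∑ i ∈ range (n+1-k),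
          (Ω i a • dA Ψ (k+1) (Ψ (n-k-i) m) + δ (k+1) (Ω i a) • Ψ (n-k-i) m) :=
    Finset.sum_congr rfl fun k hk => hinner k (Finset.mem_range.mp hk)
  rw [hsum, claim, Finset.sum_range_succ, add_sub_cancel_left]
  have h1 : n + 1 - n = 1 := by omega
  rw [h1, Finset.sum_range_one]
  simp only [Nat.sub_zero, Nat.sub_self, hΩ0, hΨ0]


/-- If the higher derivation `Ω` on `A` is determined by ordinary derivations `δ` and `Ψ` is a
higher `Ω`-derivation on an `A`-module `M`, then `Ψ` is determined by a sequence of ordinary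
`δ i`-derivations `d i` on `M` via `(n+1) • Ψ (n+1) = ∑_{k=0}^{n} d (k+1) ∘ Ψ (n-k)`. -/
theorem stmt_6 {F A M : Type*} [Field F] [CharZero F] [Ring A] [Algebra F A]
    [AddCommGroup M] [Module A M]
    (Ω δ : ℕ → A → A)
    (hΩadd : ∀ k a b, Ω k (a + b) = Ω k a + Ω k b)
    (hΩ0 : ∀ a, Ω 0 a = a)
    (hΩmul : ∀ k a b, Ω k (a * b) = ∑ i ∈ Finset.range (k + 1), Ω i a * Ω (k - i) b)
    (hδadd : ∀ i a b, δ i (a + b) = δ i a + δ i b)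
    (hδ : ∀ i, 1 ≤ i → ∀ a b : A, δ i (a * b) = δ i a * b + a * δ i b)
    (hrec : ∀ (n : ℕ) (a : A),
      (n + 1) • Ω (n + 1) a = ∑ k ∈ Finset.range (n + 1), δ (k + 1) (Ω (n - k) a))
    (Ψ : ℕ → M → M)
    (hΨadd : ∀ k m m', Ψ k (m + m') = Ψ k m + Ψ k m')
    (hΨ0 : ∀ m, Ψ 0 m = m)
    (hΨ : ∀ k (a : A) (m : M),
      Ψ k (a • m) = ∑ i ∈ Finset.range (k + 1), Ω i a • Ψ (k - i) m) :
    ∃ d : ℕ → M → M,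
      (∀ i, 1 ≤ i →
        (∀ m m', d i (m + m') = d i m + d i m') ∧
        (∀ (a : A) (m : M), d i (a • m) = a • d i m + δ i a • m)) ∧
      (∀ (n : ℕ) (m : M),
        (n + 1) • Ψ (n + 1) m = ∑ k ∈ Finset.range (n + 1), d (k + 1) (Ψ (n - k) m)) := by
  refine ⟨dA Ψ, fun i hi => ?_, fun n m => (dA_rec Ψ hΨ0 n m).symm⟩
  obtain ⟨j, rfl⟩ : ∃ j, i = j + 1 := ⟨i - 1, by omega⟩
  exact ⟨dA_add Ψ hΨadd j, dA_smul Ω δ hΩ0 hrec Ψ hΨadd hΨ0 hΨ j⟩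
end

section
/- Let 𝒞 be an F-linear category over a field F of characteristic zero, and (T, θ, ζ, Δ) a higher differential monad on 𝒞 (Δ = {Δ_i : T → T}_{i=0}^∞ with Δ_0 = id_T and Δ_i ∘ θ = θ ∘ Σ_{k=0}^i Δ_k ∗ Δ_{i-k}). Then there exists a sequence {δ_n : T → T}_{n=1}^∞ of ordinary derivations on T such that (n+1)·Δ_{n+1} = Σ_{k=0}^n δ_{k+1} ∘ Δ_{n-k} for each n ≥ 0. -/
open CategoryTheory Finset

section Aux

variable {C : Type*} [Category C] [Preadditive C]

/-- The `n`-th ordinary derivation candidate (shifted by one). -/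
def dAux {T : C ⥤ C} (Δ : ℕ → (T ⟶ T)) : ℕ → (T ⟶ T)
  | n => (n + 1) • Δ (n + 1) - ∑ k ∈ (Finset.range n).attach, Δ (n - k.1) ≫ dAux Δ k.1
  termination_by n => n
  decreasing_by exact Finset.mem_range.mp k.2

/-- The sequence of derivations: `δAux Δ 0 = 0` and `δAux Δ (n+1) = dAux Δ n`. -/
def δAux {T : C ⥤ C} (Δ : ℕ → (T ⟶ T)) : ℕ → (T ⟶ T)
  | 0 => 0
  | (n + 1) => dAux Δ n

lemma dAux_def {T : C ⥤ C} (Δ : ℕ → (T ⟶ T)) (n : ℕ) :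
    dAux Δ n = (n + 1) • Δ (n + 1) - ∑ k ∈ Finset.range n, Δ (n - k) ≫ dAux Δ k := by
  rw [dAux]
  congr 1
  exact Finset.sum_attach (Finset.range n) (fun k => Δ (n - k) ≫ dAux Δ k)

lemma δAux_sum {T : C ⥤ C} (Δ : ℕ → (T ⟶ T)) (hΔ0 : Δ 0 = 𝟙 T) (N : ℕ) :
    ∑ m ∈ Finset.range (N + 1), Δ (N - m) ≫ δAux Δ m = N • Δ N := by
  cases N with
  | zero => simp [δAux]
  | succ n =>
    rw [Finset.sum_range_succ' (fun m => Δ (n + 1 - m) ≫ δAux Δ m)]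
    have h0 : Δ (n + 1 - 0) ≫ δAux Δ 0 = 0 := by simp [δAux]
    rw [h0, add_zero]
    simp only [Nat.succ_sub_succ]
    have : ∀ k, δAux Δ (k + 1) = dAux Δ k := fun k => rfl
    simp only [this]
    rw [Finset.sum_range_succ, Nat.sub_self, hΔ0, Category.id_comp, dAux_def]
    abel


lemma sum_reflect_aux {β : Type*} [AddCommMonoid β] (L : ℕ) (f : ℕ → ℕ → β) :
    ∑ k ∈ Finset.range (L + 1), f (L - k) k = ∑ k ∈ Finset.range (L + 1), f k (L - k) := by
  rw [← Finset.sum_range_reflect (fun k => f (L - k) k) (L + 1)]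
  refine Finset.sum_congr rfl fun j hj => ?_
  have hj' : j ≤ L := Nat.lt_succ_iff.mp (Finset.mem_range.mp hj)
  have h1 : L + 1 - 1 - j = L - j := by omega
  have h2 : L - (L - j) = j := by omega
  rw [h1, h2]

end Aux

/-- Characterization of higher derivations on a monad: if `(T,θ,ζ,Δ)` is a higher differential
monad on an `F`-linear category (`F` of characteristic zero), then there is a sequence
`δ` of ordinary derivations on `T` with `(n+1) • Δ (n+1) = ∑_{k=0}^n δ (k+1) ∘ Δ (n-k)`. -/
theorem stmt_10 {F : Type*} [Field F] [CharZero F]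
    {C : Type*} [Category C] [Preadditive C] [Linear F C]
    (T : Monad C) [T.toFunctor.Additive] [Functor.Linear F T.toFunctor]
    (Δ : ℕ → (T.toFunctor ⟶ T.toFunctor))
    (hΔ0 : Δ 0 = 𝟙 T.toFunctor)
    (hΔ : ∀ (i : ℕ) (M : C), T.μ.app M ≫ (Δ i).app M =
      (∑ k ∈ Finset.range (i + 1),
        T.map ((Δ (i - k)).app M) ≫ (Δ k).app (T.obj M)) ≫ T.μ.app M) :
    ∃ δ : ℕ → (T.toFunctor ⟶ T.toFunctor),
      (∀ (n : ℕ) (M : C), T.μ.app M ≫ (δ (n + 1)).app M =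
        (T.map ((δ (n + 1)).app M) + (δ (n + 1)).app (T.obj M)) ≫ T.μ.app M) ∧
      (∀ n : ℕ, (n + 1) • Δ (n + 1) =
        ∑ k ∈ Finset.range (n + 1), Δ (n - k) ≫ δ (k + 1)) := by
  refine ⟨δAux Δ, ?_, ?_⟩
  · -- derivation property
    intro n M
    -- abbreviations
    set μ : T.obj (T.obj M) ⟶ T.obj M := T.μ.app M with hμ
    -- e m : the derivation defect
    set e : ℕ → (T.obj (T.obj M) ⟶ T.obj M) := fun m =>
      μ ≫ (δAux Δ m).app M -
        (T.map ((δAux Δ m).app M) + (δAux Δ m).app (T.obj M)) ≫ μ with he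
    set P : ℕ → (T.obj (T.obj M) ⟶ T.obj (T.obj M)) := fun i =>
      ∑ k ∈ Finset.range (i + 1), T.map ((Δ (i - k)).app M) ≫ (Δ k).app (T.obj M) with hP
    have hP0 : P 0 = 𝟙 _ := by simp [hP, hΔ0]
    -- master identity
    have master : ∀ N : ℕ, ∑ m ∈ Finset.range (N + 1), P (N - m) ≫ e m = 0 := by
      intro N
      have hPμ : ∀ i, P i ≫ μ = μ ≫ (Δ i).app M := fun i => (hΔ i M).symm
      have hsA : ∀ L : ℕ, ∑ m ∈ Finset.range (L + 1),
          (Δ (L - m)).app M ≫ (δAux Δ m).app M = L • (Δ L).app M := by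
        intro L
        simpa using congrArg (fun x : T.toFunctor ⟶ T.toFunctor => x.app M) (δAux_sum Δ hΔ0 L)
      have hsR : ∀ L : ℕ, ∑ m ∈ Finset.range (L + 1),
          T.map ((Δ (L - m)).app M ≫ (δAux Δ m).app M) = L • T.map ((Δ L).app M) := by
        intro L
        rw [← Functor.map_sum, hsA L, Functor.map_nsmul]
      have hsB : ∀ L : ℕ, ∑ m ∈ Finset.range (L + 1),
          (Δ (L - m)).app (T.obj M) ≫ (δAux Δ m).app (T.obj M) = L • (Δ L).app (T.obj M) := by
        intro L
        simpa using congrArg (fun x : T.toFunctor ⟶ T.toFunctor => x.app (T.obj M))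
          (δAux_sum Δ hΔ0 L)
      have hcond : ∀ x y : ℕ, x ∈ Finset.range (N + 1) ∧ y ∈ Finset.range (N - x + 1) ↔
          x ∈ Finset.range (N - y + 1) ∧ y ∈ Finset.range (N + 1) := by
        intro x y
        simp only [Finset.mem_range]
        omega
      have key : ∀ m ∈ Finset.range (N + 1), P (N - m) ≫ e m =
          μ ≫ (Δ (N - m)).app M ≫ (δAux Δ m).app M -
          ((∑ k ∈ Finset.range (N - m + 1),
              T.map ((Δ (N - m - k)).app M ≫ (δAux Δ m).app M) ≫ (Δ k).app (T.obj M) ≫ μ) +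
           ∑ k ∈ Finset.range (N - m + 1),
              T.map ((Δ (N - m - k)).app M) ≫
                (Δ k).app (T.obj M) ≫ (δAux Δ m).app (T.obj M) ≫ μ) := by
        intro m _
        rw [he, Preadditive.comp_sub]
        congr 1
        · rw [← Category.assoc, hPμ (N - m), Category.assoc]
        · rw [Preadditive.add_comp, Preadditive.comp_add, hP]
          congr 1
          · rw [Preadditive.sum_comp]
            simp only [Category.assoc]
            refine Finset.sum_congr rfl fun k _ => ?_
            rw [← NatTrans.naturality_assoc, ← Functor.map_comp_assoc]
          · rw [Preadditive.sum_comp]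
            simp only [Category.assoc]
      rw [Finset.sum_congr rfl key, Finset.sum_sub_distrib, Finset.sum_add_distrib,
        sub_eq_zero]
      have S1 : ∑ m ∈ Finset.range (N + 1), μ ≫ (Δ (N - m)).app M ≫ (δAux Δ m).app M =
          N • (μ ≫ (Δ N).app M) := by
        rw [← Preadditive.comp_sum, hsA N, Preadditive.comp_nsmul]
      have SY : ∑ m ∈ Finset.range (N + 1), ∑ k ∈ Finset.range (N - m + 1),
            T.map ((Δ (N - m - k)).app M ≫ (δAux Δ m).app M) ≫ (Δ k).app (T.obj M) ≫ μ =
          ∑ k ∈ Finset.range (N + 1),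
            (N - k) • (T.map ((Δ (N - k)).app M) ≫ (Δ k).app (T.obj M) ≫ μ) := by
        rw [Finset.sum_comm' hcond]
        refine Finset.sum_congr rfl fun k _ => ?_
        have hswap : ∀ m : ℕ, N - m - k = N - k - m := fun m => by omega
        simp only [hswap]
        rw [← Preadditive.sum_comp, hsR (N - k), Preadditive.nsmul_comp]
      have SZ : ∑ m ∈ Finset.range (N + 1), ∑ k ∈ Finset.range (N - m + 1),
            T.map ((Δ (N - m - k)).app M) ≫
              (Δ k).app (T.obj M) ≫ (δAux Δ m).app (T.obj M) ≫ μ =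
          ∑ k ∈ Finset.range (N + 1),
            k • (T.map ((Δ (N - k)).app M) ≫ (Δ k).app (T.obj M) ≫ μ) := by
        have hrefl : ∀ m ∈ Finset.range (N + 1),
            (∑ k ∈ Finset.range (N - m + 1), T.map ((Δ (N - m - k)).app M) ≫
              (Δ k).app (T.obj M) ≫ (δAux Δ m).app (T.obj M) ≫ μ) =
            ∑ k ∈ Finset.range (N - m + 1), T.map ((Δ k).app M) ≫
              (Δ (N - m - k)).app (T.obj M) ≫ (δAux Δ m).app (T.obj M) ≫ μ :=
          fun m _ => sum_reflect_aux (N - m) (fun u v => T.map ((Δ u).app M) ≫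
            (Δ v).app (T.obj M) ≫ (δAux Δ m).app (T.obj M) ≫ μ)
        rw [Finset.sum_congr rfl hrefl, Finset.sum_comm' hcond]
        calc ∑ k ∈ Finset.range (N + 1), ∑ m ∈ Finset.range (N - k + 1),
              T.map ((Δ k).app M) ≫
                (Δ (N - m - k)).app (T.obj M) ≫ (δAux Δ m).app (T.obj M) ≫ μ
            = ∑ k ∈ Finset.range (N + 1),
              (N - k) • (T.map ((Δ k).app M) ≫ (Δ (N - k)).app (T.obj M) ≫ μ) := by
              refine Finset.sum_congr rfl fun k _ => ?_
              have hswap : ∀ m : ℕ, N - m - k = N - k - m := fun m => by omega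
              simp only [hswap]
              have hinner : ∑ m ∈ Finset.range (N - k + 1),
                  (Δ (N - k - m)).app (T.obj M) ≫ (δAux Δ m).app (T.obj M) ≫ μ =
                  (N - k) • ((Δ (N - k)).app (T.obj M) ≫ μ) := by
                calc ∑ m ∈ Finset.range (N - k + 1),
                    (Δ (N - k - m)).app (T.obj M) ≫ (δAux Δ m).app (T.obj M) ≫ μ
                    = (∑ m ∈ Finset.range (N - k + 1),
                        (Δ (N - k - m)).app (T.obj M) ≫ (δAux Δ m).app (T.obj M)) ≫ μ := by
                      rw [Preadditive.sum_comp]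
                      simp only [Category.assoc]
                  _ = (N - k) • ((Δ (N - k)).app (T.obj M) ≫ μ) := by
                      rw [hsB (N - k), Preadditive.nsmul_comp]
              rw [← Preadditive.comp_sum, hinner, Preadditive.comp_nsmul]
          _ = ∑ k ∈ Finset.range (N + 1),
              k • (T.map ((Δ (N - k)).app M) ≫ (Δ k).app (T.obj M) ≫ μ) :=
            (sum_reflect_aux N (fun u v =>
              v • (T.map ((Δ u).app M) ≫ (Δ v).app (T.obj M) ≫ μ))).symm
      rw [S1, SY, SZ, ← Finset.sum_add_distrib, hΔ N M, Preadditive.sum_comp,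
        Finset.smul_sum]
      refine Finset.sum_congr rfl fun k hk => ?_
      rw [Category.assoc, ← add_nsmul]
      congr 1
      have := Finset.mem_range.mp hk
      omega
    -- strong induction
    have hzero : ∀ N : ℕ, e N = 0 := by
      intro N
      induction N using Nat.strong_induction_on with
      | _ N ih =>
        have := master N
        rw [Finset.sum_range_succ, Nat.sub_self, hP0, Category.id_comp] at this
        have hrest : ∑ m ∈ Finset.range N, P (N - m) ≫ e m = 0 := by
          refine Finset.sum_eq_zero fun m hm => ?_
          rw [ih m (Finset.mem_range.mp hm), Limits.comp_zero]
        rw [hrest, zero_add] at this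
        exact this
    have := hzero (n + 1)
    rw [he] at this
    simp only [sub_eq_zero] at this
    exact this
  · -- sum identity
    intro n
    have := δAux_sum Δ hΔ0 (n + 1)
    rw [Finset.sum_range_succ' (fun m => Δ (n + 1 - m) ≫ δAux Δ m)] at this
    have h0 : Δ (n + 1 - 0) ≫ δAux Δ 0 = 0 := by simp [δAux]
    rw [h0, add_zero] at this
    simp only [Nat.succ_sub_succ] at this
    exact this.symm
end

section
/- Let (T, θ, ζ) be an additive monad on a preadditive category 𝒞 and δ := θ∘(μ_T − Tμ) for a natural transformation μ : 1_𝒞 → T. Define Δ_0 = id_T, Δ_1 = δ, and Δ_n = θ ∘ μ_T ∘ Δ_{n-1} for n ≥ 2. Then Δ = {Δ_n}_{n≥0} is a higher derivation on T, i.e. Δ_n ∘ θ = θ ∘ Σ_{k=0}^n Δ_k ∗ Δ_{n-k} for all n ≥ 0. -/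
open CategoryTheory

/-- With `δ = θ∘(u_T − Tu)`, the family `Δ 0 = id`, `Δ 1 = δ`, `Δ n = θ ∘ u_T ∘ Δ (n-1)`
(`n ≥ 2`) is a higher derivation on the monad `T`:
`Δ n ∘ θ = θ ∘ ∑_{k=0}^n Δ k ∗ Δ (n-k)` for all `n ≥ 0`. -/
theorem stmt_11 {C : Type*} [Category C] [Preadditive C]
    (T : Monad C) [T.toFunctor.Additive]
    (u : 𝟭 C ⟶ T.toFunctor)
    (uT Tu : ∀ M : C, T.obj M ⟶ T.obj (T.obj M))
    (huT : ∀ M : C, uT M = u.app (T.obj M))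
    (hTu : ∀ M : C, Tu M = T.map (u.app M))
    (Δ : ℕ → (T.toFunctor ⟶ T.toFunctor))
    (hΔ0 : Δ 0 = 𝟙 T.toFunctor)
    (hΔ1 : ∀ M : C, (Δ 1).app M = (uT M - Tu M) ≫ T.μ.app M)
    (hΔn : ∀ n : ℕ, 2 ≤ n → ∀ M : C,
      (Δ n).app M = (Δ (n - 1)).app M ≫ uT M ≫ T.μ.app M) :
    ∀ (n : ℕ) (M : C), T.μ.app M ≫ (Δ n).app M =
      (∑ k ∈ Finset.range (n + 1),
        T.map ((Δ (n - k)).app M) ≫ (Δ k).app (T.obj M)) ≫ T.μ.app M := by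
  have key : ∀ M : C, T.μ.app M ≫ u.app (T.obj M) ≫ T.μ.app M
      = u.app (T.obj (T.obj M)) ≫ T.μ.app (T.obj M) ≫ T.μ.app M := by
    intro M
    have h1 := u.naturality (T.μ.app M)
    simp only [Functor.id_map] at h1
    rw [← Category.assoc, h1, Category.assoc, T.assoc M]
    rfl
  intro n
  induction n using Nat.strong_induction_on with
  | _ n ih =>
    match n with
    | 0 =>
      intro M
      simp [hΔ0]
    | 1 =>
      intro M
      have hnatμ := T.μ.naturality (u.app M)
      simp only [Functor.comp_map, Functor.id_obj] at hnatμ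
      have hnatu := u.naturality (T.μ.app M)
      simp only [Functor.id_map, Functor.comp_obj] at hnatu
      simp only [hΔ1, huT, hTu, hΔ0, Finset.sum_range_succ, Finset.sum_range_zero,
        zero_add, NatTrans.id_app, Category.comp_id, Category.id_comp,
        Preadditive.sub_comp, Preadditive.comp_sub, Preadditive.add_comp,
        Functor.map_sub, Functor.map_comp, Category.assoc]
      rw [← Category.assoc (T.μ.app M) (u.app (T.obj M)), hnatu, Category.assoc, T.assoc M]
      rw [← Category.assoc (T.μ.app M) (T.map (u.app M)), ← hnatμ, Category.assoc]
      simp only [CategoryTheory.Functor.map_id, Category.id_comp]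
      abel
    | (m + 2) =>
      intro M
      have ih1 := ih (m + 1) (by omega) M
      -- LHS as a sum
      have lhs_eq : T.μ.app M ≫ (Δ (m + 2)).app M
          = ∑ k ∈ Finset.range (m + 2),
              T.map ((Δ (m + 1 - k)).app M) ≫ (Δ k).app (T.obj M) ≫
                u.app (T.obj (T.obj M)) ≫ T.μ.app (T.obj M) ≫ T.μ.app M := by
        rw [hΔn (m + 2) (by omega) M, huT]
        show T.μ.app M ≫ (Δ (m + 1)).app M ≫ u.app (T.obj M) ≫ T.μ.app M = _
        rw [← Category.assoc, ih1]
        simp only [Preadditive.sum_comp, Category.assoc]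
        refine Finset.sum_congr rfl fun k _ => ?_
        rw [key M]
      rw [lhs_eq]
      simp only [Preadditive.sum_comp, Category.assoc]
      rw [Finset.sum_range_succ' (fun k => T.map ((Δ (m + 1 - k)).app M) ≫ (Δ k).app (T.obj M) ≫
            u.app (T.obj (T.obj M)) ≫ T.μ.app (T.obj M) ≫ T.μ.app M) (m + 1),
          Finset.sum_range_succ' (fun k => T.map ((Δ (m + 2 - k)).app M) ≫ (Δ k).app (T.obj M) ≫
            T.μ.app M) (m + 2),
          Finset.sum_range_succ' (fun k => T.map ((Δ (m + 2 - (k + 1))).app M) ≫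
            (Δ (k + 1)).app (T.obj M) ≫ T.μ.app M) (m + 1)]
      have hterm : ∀ k ∈ Finset.range (m + 1),
          T.map ((Δ (m + 1 - (k + 1))).app M) ≫ (Δ (k + 1)).app (T.obj M) ≫
            u.app (T.obj (T.obj M)) ≫ T.μ.app (T.obj M) ≫ T.μ.app M
          = T.map ((Δ (m + 2 - (k + 1 + 1))).app M) ≫ (Δ (k + 1 + 1)).app (T.obj M) ≫
            T.μ.app M := by
        intro k _
        have : (Δ (k + 2)).app (T.obj M)
            = (Δ (k + 1)).app (T.obj M) ≫ u.app (T.obj (T.obj M)) ≫ T.μ.app (T.obj M) := by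
          rw [hΔn (k + 2) (by omega), huT]
          norm_num
        have hsub : m + 1 - (k + 1) = m + 2 - (k + 1 + 1) := by omega
        rw [hsub, show k + 1 + 1 = k + 2 from rfl, this]
        simp only [Category.assoc]
      rw [Finset.sum_congr rfl hterm]
      -- remaining: G 0 = F 1 + F 0
      have hF0 : T.map ((Δ (m + 2 - 0)).app M) ≫ (Δ 0).app (T.obj M) ≫ T.μ.app M
          = T.map ((Δ (m + 1)).app M) ≫ T.map (u.app (T.obj M)) ≫
              T.μ.app (T.obj M) ≫ T.μ.app M := by
        simp only [Nat.sub_zero]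
        rw [hΔ0]
        simp only [NatTrans.id_app, Category.id_comp]
        rw [hΔn (m + 2) (by omega) M, huT]
        simp only [Functor.map_comp, Category.assoc, T.assoc M]
        norm_num
      have hF1 : T.map ((Δ (m + 2 - (0 + 1))).app M) ≫ (Δ (0 + 1)).app (T.obj M) ≫ T.μ.app M
          = T.map ((Δ (m + 1)).app M) ≫ (uT (T.obj M) -
              Tu (T.obj M)) ≫ T.μ.app (T.obj M) ≫ T.μ.app M := by
        have hs : m + 2 - (0 + 1) = m + 1 := by omega
        rw [hs, hΔ1]
        simp only [Category.assoc]
      have hG0 : T.map ((Δ (m + 1 - 0)).app M) ≫ (Δ 0).app (T.obj M) ≫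
            u.app (T.obj (T.obj M)) ≫ T.μ.app (T.obj M) ≫ T.μ.app M
          = T.map ((Δ (m + 1)).app M) ≫ u.app (T.obj (T.obj M)) ≫
              T.μ.app (T.obj M) ≫ T.μ.app M := by
        simp only [Nat.sub_zero, hΔ0, NatTrans.id_app, Category.id_comp]
      rw [hF0, hF1, hG0, huT, hTu]
      simp only [Preadditive.sub_comp, Preadditive.comp_sub]
      abel
end

section
/- In the setting of the previous higher derivation Δ_n = θ∘μ_T∘Δ_{n-1} on a monad T, for every T-module (M,f_M) the maps D_0 = id_M, D_n = (f_M ∘ μ_M)^n for n ≥ 1 form a higher Δ-derivation on M, i.e. D_n ∘ f_M = f_M ∘ (Σ_{k=0}^n T(D_k) ∘ (Δ_{n-k})_M) for all n ≥ 0. -/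
open CategoryTheory

/-- For the higher derivation `Δ n = θ∘u_T∘Δ (n-1)` on a monad `T` and any `T`-module
`(M, f_M)`, the maps `D 0 = id`, `D n = (f_M ∘ u_M)^n` form a higher `Δ`-derivation on `M`:
`D n ∘ f_M = f_M ∘ (∑_{k=0}^n T(D k) ∘ (Δ (n-k))_M)` for all `n ≥ 0`. -/
theorem stmt_12 {C : Type*} [Category C] [Preadditive C]
    (T : Monad C) [T.toFunctor.Additive]
    (u : 𝟭 C ⟶ T.toFunctor)
    (uT Tu : ∀ M : C, T.obj M ⟶ T.obj (T.obj M))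
    (huT : ∀ M : C, uT M = u.app (T.obj M))
    (hTu : ∀ M : C, Tu M = T.map (u.app M))
    (Δ : ℕ → (T.toFunctor ⟶ T.toFunctor))
    (hΔ0 : Δ 0 = 𝟙 T.toFunctor)
    (hΔ1 : ∀ M : C, (Δ 1).app M = (uT M - Tu M) ≫ T.μ.app M)
    (hΔn : ∀ n : ℕ, 2 ≤ n → ∀ M : C,
      (Δ n).app M = (Δ (n - 1)).app M ≫ uT M ≫ T.μ.app M)
    (alg : T.Algebra)
    (uM : alg.A ⟶ T.obj alg.A) (huM : uM = u.app alg.A)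
    (D : ℕ → (alg.A ⟶ alg.A))
    (hD0 : D 0 = 𝟙 alg.A)
    (hDs : ∀ n : ℕ, D (n + 1) = D n ≫ (uM ≫ alg.a)) :
    ∀ n : ℕ, alg.a ≫ D n =
      (∑ k ∈ Finset.range (n + 1),
        (Δ (n - k)).app alg.A ≫ T.map (D k)) ≫ alg.a := by
  have hassoc : T.μ.app alg.A ≫ alg.a = T.map alg.a ≫ alg.a := alg.assoc
  -- key lemma 1
  have key : ∀ g : alg.A ⟶ alg.A,
      u.app (T.obj alg.A) ≫ T.μ.app alg.A ≫ T.map g ≫ alg.a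
        = (T.map g ≫ alg.a) ≫ u.app alg.A ≫ alg.a := by
    intro g
    have h1 : T.map (T.map g) ≫ T.μ.app alg.A = T.μ.app alg.A ≫ T.map g :=
      T.μ.naturality g
    have h3 := u.naturality (T.map g ≫ alg.a)
    simp only [Functor.id_map] at h3
    calc u.app (T.obj alg.A) ≫ T.μ.app alg.A ≫ T.map g ≫ alg.a
        = u.app (T.obj alg.A) ≫ T.map (T.map g) ≫ T.μ.app alg.A ≫ alg.a := by
          rw [← Category.assoc (T.map (T.map g)), h1, Category.assoc]
      _ = u.app (T.obj alg.A) ≫ T.map (T.map g ≫ alg.a) ≫ alg.a := by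
          rw [hassoc, T.toFunctor.map_comp, Category.assoc]
      _ = (T.map g ≫ alg.a) ≫ u.app alg.A ≫ alg.a := by
          rw [← Category.assoc, ← h3, Category.assoc]
  -- key lemma 2
  have key2 : ∀ m : ℕ, Tu alg.A ≫ T.μ.app alg.A ≫ T.map (D m) ≫ alg.a
      = T.map (D (m+1)) ≫ alg.a := by
    intro m
    rw [hTu]
    have h1 : T.map (T.map (D m)) ≫ T.μ.app alg.A = T.μ.app alg.A ≫ T.map (D m) :=
      T.μ.naturality (D m)
    have h2 : D m ≫ u.app alg.A = u.app alg.A ≫ T.map (D m) := by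
      simpa using u.naturality (D m)
    rw [hDs m, huM]
    calc T.map (u.app alg.A) ≫ T.μ.app alg.A ≫ T.map (D m) ≫ alg.a
        = T.map (u.app alg.A) ≫ T.map (T.map (D m)) ≫ T.μ.app alg.A ≫ alg.a := by
          rw [← Category.assoc (T.map (T.map (D m))), h1, Category.assoc]
      _ = T.map (u.app alg.A ≫ T.map (D m) ≫ alg.a) ≫ alg.a := by
          rw [hassoc]; simp [Functor.map_comp]
      _ = T.map ((D m ≫ u.app alg.A ≫ alg.a)) ≫ alg.a := by
          rw [← Category.assoc (D m), h2, Category.assoc]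
      _ = T.map (D m ≫ u.app alg.A ≫ alg.a) ≫ alg.a := rfl
  intro n
  induction n with
  | zero => simp [hD0, hΔ0]
  | succ n ih =>
    rw [Finset.sum_range_succ]
    have hterm : ∀ k ∈ Finset.range (n+1),
        (Δ (n+1-k)).app alg.A ≫ T.map (D k)
          = ((Δ (n-k)).app alg.A ≫ uT alg.A ≫ T.μ.app alg.A) ≫ T.map (D k)
            - (if k = n then Tu alg.A ≫ T.μ.app alg.A ≫ T.map (D k) else 0) := by
      intro k hk
      rw [Finset.mem_range, Nat.lt_succ_iff] at hk
      rcases eq_or_lt_of_le hk with h | h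
      · subst h
        have e1 : k + 1 - k = 1 := by omega
        have e0 : k - k = 0 := by omega
        rw [e1, e0, hΔ1, hΔ0, if_pos rfl]
        simp [Preadditive.sub_comp]
      · have h2 : 2 ≤ n + 1 - k := by omega
        rw [hΔn _ h2 alg.A]
        have e : n + 1 - k - 1 = n - k := by omega
        rw [e, if_neg (by omega)]
        simp
    rw [Finset.sum_congr rfl hterm, Finset.sum_sub_distrib]
    rw [Finset.sum_ite_eq' (Finset.range (n+1)) n
      (fun k => Tu alg.A ≫ T.μ.app alg.A ≫ T.map (D k))]
    rw [if_pos (Finset.self_mem_range_succ n)]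
    rw [Nat.sub_self, hΔ0]
    simp only [Preadditive.sub_comp, Preadditive.add_comp, Preadditive.sum_comp,
      Category.assoc, NatTrans.id_app, Category.id_comp]
    rw [key2 n]
    have : ∀ k ∈ Finset.range (n+1),
        (Δ (n-k)).app alg.A ≫ uT alg.A ≫ T.μ.app alg.A ≫ T.map (D k) ≫ alg.a
          = (Δ (n-k)).app alg.A ≫ T.map (D k) ≫ alg.a ≫ u.app alg.A ≫ alg.a := by
      intro k _
      rw [huT, key (D k)]
      simp
    rw [Finset.sum_congr rfl this]
    have hsum : ∑ k ∈ Finset.range (n+1),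
        (Δ (n-k)).app alg.A ≫ T.map (D k) ≫ alg.a ≫ u.app alg.A ≫ alg.a
        = (∑ k ∈ Finset.range (n+1), (Δ (n-k)).app alg.A ≫ T.map (D k))
            ≫ alg.a ≫ u.app alg.A ≫ alg.a := by
      rw [Preadditive.sum_comp]
      simp only [Category.assoc]
    rw [hsum, ← Category.assoc, ← ih, hDs n, huM]
    simp
end

section
/- Let Ω be a higher derivation of order n on a ring A and let ℒ be a Gabriel filter of left ideals of A corresponding to a hereditary torsion theory τ. Suppose ℒ is Ω-invariant of order n, i.e. for every I ∈ ℒ there exists J ∈ ℒ with Ω_i(J) ⊆ I for all 0 ≤ i ≤ n. Then for every A-module M and every higher Ω-derivation Ψ of order n on M, Ψ_i(τ(M)) ⊆ τ(M) for all 0 ≤ i ≤ n. -/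
/-- Annihilator of an element as a left ideal. -/
def annIdeal (A : Type*) [Ring A] {M : Type*} [AddCommGroup M] [Module A M] (m : M) :
    Submodule A A :=
  LinearMap.ker (LinearMap.toSpanSingleton A M m)

/-- Left quotient ideal `(I : a) = {x | x • a ∈ I}`. -/
def leftColon {A : Type*} [Ring A] (I : Submodule A A) (a : A) : Submodule A A :=
  Submodule.comap (LinearMap.toSpanSingleton A A a) I

/-- If the Gabriel filter `ℒ` of the hereditary torsion theory `τ` is `Ω`-invariant of order
`n`, then every higher `Ω`-derivation `Ψ` of order `n` on every `A`-module `M` preserves the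
torsion submodule: `Ψ i (τ(M)) ⊆ τ(M)` for all `0 ≤ i ≤ n`. -/
theorem stmt_15 {A M : Type*} [Ring A] [AddCommGroup M] [Module A M] (n : ℕ)
    (ℒ : Set (Submodule A A))
    (hTop : (⊤ : Submodule A A) ∈ ℒ)
    (hUp : ∀ I ∈ ℒ, ∀ J : Submodule A A, I ≤ J → J ∈ ℒ)
    (hColon : ∀ I ∈ ℒ, ∀ a : A, leftColon I a ∈ ℒ)
    (hGab : ∀ I : Submodule A A, (∃ J ∈ ℒ, ∀ a ∈ J, leftColon I a ∈ ℒ) → I ∈ ℒ)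
    (Ω : ℕ → A → A)
    (hΩadd : ∀ k a b, Ω k (a + b) = Ω k a + Ω k b)
    (hΩ0 : ∀ a, Ω 0 a = a)
    (hΩmul : ∀ k ≤ n, ∀ a b : A,
      Ω k (a * b) = ∑ i ∈ Finset.range (k + 1), Ω i a * Ω (k - i) b)
    (hinv : ∀ I ∈ ℒ, ∃ J ∈ ℒ, ∀ i ≤ n, ∀ x ∈ J, Ω i x ∈ I)
    (Ψ : ℕ → M → M)
    (hΨadd : ∀ k m m', Ψ k (m + m') = Ψ k m + Ψ k m')
    (hΨ0 : ∀ m, Ψ 0 m = m)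
    (hΨ : ∀ k ≤ n, ∀ (a : A) (m : M),
      Ψ k (a • m) = ∑ i ∈ Finset.range (k + 1), Ω i a • Ψ (k - i) m) :
    ∀ i ≤ n, ∀ m : M, annIdeal A m ∈ ℒ → annIdeal A (Ψ i m) ∈ ℒ := by
  have memAnn : ∀ (z : M) (a : A), a ∈ annIdeal A z ↔ a • z = 0 := by
    intro z a
    simp [annIdeal, LinearMap.mem_ker]
  have memColon : ∀ (I : Submodule A A) (a y : A), y ∈ leftColon I a ↔ y * a ∈ I := by
    intro I a y
    simp [leftColon, Submodule.mem_comap, smul_eq_mul]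
  have hInter : ∀ I ∈ ℒ, ∀ J ∈ ℒ, I ⊓ J ∈ ℒ := by
    intro I hI J hJ
    apply hGab
    refine ⟨J, hJ, fun a ha => ?_⟩
    apply hUp _ (hColon I hI a)
    intro y hy
    rw [memColon] at hy
    rw [memColon, Submodule.mem_inf]
    exact ⟨hy, by simpa [smul_eq_mul] using J.smul_mem y ha⟩
  have Tzero : annIdeal A (0 : M) ∈ ℒ := by
    have h : annIdeal A (0 : M) = ⊤ := by
      ext a; simp [memAnn]
    rw [h]; exact hTop
  have Tadd : ∀ z w : M, annIdeal A z ∈ ℒ → annIdeal A w ∈ ℒ →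
      annIdeal A (z + w) ∈ ℒ := by
    intro z w hz hw
    apply hUp _ (hInter _ hz _ hw)
    intro a ha
    rw [Submodule.mem_inf, memAnn, memAnn] at ha
    rw [memAnn, smul_add, ha.1, ha.2, add_zero]
  have Tneg : ∀ z : M, annIdeal A z ∈ ℒ → annIdeal A (-z) ∈ ℒ := by
    intro z hz
    have h : annIdeal A (-z) = annIdeal A z := by
      ext a; rw [memAnn, memAnn, smul_neg, neg_eq_zero]
    rw [h]; exact hz
  have Tsmul : ∀ (a : A) (z : M), annIdeal A z ∈ ℒ → annIdeal A (a • z) ∈ ℒ := by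
    intro a z hz
    apply hUp _ (hColon _ hz a)
    intro y hy
    rw [memColon, memAnn] at hy
    rw [memAnn, smul_smul, hy]
  have key : ∀ k, k ≤ n → ∀ m : M, annIdeal A m ∈ ℒ → annIdeal A (Ψ k m) ∈ ℒ := by
    intro k
    induction k using Nat.strong_induction_on with
    | _ k IH =>
      intro hk m hm
      obtain ⟨J, hJ, hJΩ⟩ := hinv _ hm
      apply hGab
      refine ⟨J, hJ, fun x hx => ?_⟩
      have hxm : x • m = 0 := by
        have h0 := hJΩ 0 (Nat.zero_le n) x hx
        rw [hΩ0] at h0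
        exact (memAnn m x).mp h0
      have hΨz : ∀ j, Ψ j (0 : M) = 0 := by
        intro j
        have h := hΨadd j 0 0
        rw [add_zero] at h
        exact left_eq_add.mp h
      have heq : x • Ψ k m = - ∑ i ∈ Finset.range k, Ω (i + 1) x • Ψ (k - (i + 1)) m := by
        have h1 := hΨ k hk x m
        rw [hxm, hΨz, Finset.sum_range_succ'] at h1
        rw [hΩ0, Nat.sub_zero] at h1
        exact eq_neg_of_add_eq_zero_right h1.symm
      have hsum : annIdeal A (∑ i ∈ Finset.range k, Ω (i + 1) x • Ψ (k - (i + 1)) m) ∈ ℒ := by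
        apply Finset.sum_induction _ (fun z => annIdeal A z ∈ ℒ) Tadd Tzero
        intro i hi'
        rw [Finset.mem_range] at hi'
        exact Tsmul _ _ (IH (k - (i + 1)) (by omega) (by omega) m hm)
      have hcol : leftColon (annIdeal A (Ψ k m)) x = annIdeal A (x • Ψ k m) := by
        ext y
        rw [memColon, memAnn, memAnn, mul_smul]
      rw [hcol, heq]
      exact Tneg _ hsum
  intro i hi m hm
  exact key i hi m hm
end

section
/- Let τ be a hereditary torsion theory on left A-modules and M a τ-torsion-free A-module with localization map Φ_M : M → Q_τ(M) into the module of quotients. If Ψ and Ψ' are two higher Ω-derivations of order n on Q_τ(M) that both extend a given higher Ω-derivation D on M (i.e. Ψ_k ∘ Φ_M = Φ_M ∘ D_k = Ψ'_k ∘ Φ_M for all k), then Ψ_k = Ψ'_k for all 0 ≤ k ≤ n. -/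
/-- Uniqueness of the extension: if `M` is τ-torsion-free with localization `Φ : M → Q_τ(M)`
(τ-torsion-free target and τ-torsion cokernel), then two higher `Ω`-derivations of order `n`
on `Q_τ(M)` both extending a higher `Ω`-derivation `D` on `M` coincide. -/
theorem stmt_17 {A M Q : Type*} [Ring A] [AddCommGroup M] [Module A M]
    [AddCommGroup Q] [Module A Q] (n : ℕ)
    (ℒ : Set (Submodule A A))
    (hTop : (⊤ : Submodule A A) ∈ ℒ)
    (hUp : ∀ I ∈ ℒ, ∀ J : Submodule A A, I ≤ J → J ∈ ℒ)
    (Ω : ℕ → A → A)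
    (hΩadd : ∀ k a b, Ω k (a + b) = Ω k a + Ω k b)
    (hΩ0 : ∀ a, Ω 0 a = a)
    (hΩmul : ∀ k ≤ n, ∀ a b : A,
      Ω k (a * b) = ∑ i ∈ Finset.range (k + 1), Ω i a * Ω (k - i) b)
    (hMtf : ∀ m : M, annIdeal A m ∈ ℒ → m = 0)
    (Φ : M →ₗ[A] Q)
    (hQtf : ∀ q : Q, annIdeal A q ∈ ℒ → q = 0)
    (hcoker : ∀ q : Q,
      Submodule.comap (LinearMap.toSpanSingleton A Q q) (LinearMap.range Φ) ∈ ℒ)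
    (D : ℕ → M → M)
    (hDadd : ∀ k m m', D k (m + m') = D k m + D k m')
    (hD0 : ∀ m, D 0 m = m)
    (hD : ∀ k ≤ n, ∀ (a : A) (m : M),
      D k (a • m) = ∑ i ∈ Finset.range (k + 1), Ω i a • D (k - i) m)
    (Ψ Ψ' : ℕ → Q → Q)
    (hΨadd : ∀ k q q', Ψ k (q + q') = Ψ k q + Ψ k q')
    (hΨ'add : ∀ k q q', Ψ' k (q + q') = Ψ' k q + Ψ' k q')
    (hΨ0 : ∀ q, Ψ 0 q = q) (hΨ'0 : ∀ q, Ψ' 0 q = q)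
    (hΨ : ∀ k ≤ n, ∀ (a : A) (q : Q),
      Ψ k (a • q) = ∑ i ∈ Finset.range (k + 1), Ω i a • Ψ (k - i) q)
    (hΨ' : ∀ k ≤ n, ∀ (a : A) (q : Q),
      Ψ' k (a • q) = ∑ i ∈ Finset.range (k + 1), Ω i a • Ψ' (k - i) q)
    (hext : ∀ k ≤ n, ∀ m : M, Ψ k (Φ m) = Φ (D k m))
    (hext' : ∀ k ≤ n, ∀ m : M, Ψ' k (Φ m) = Φ (D k m)) :
    ∀ k ≤ n, Ψ k = Ψ' k := by

  intro k
  induction k using Nat.strong_induction_on with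
  | _ k ih =>
    intro hk
    funext q
    have hδ : Ψ k q - Ψ' k q = 0 := by
      apply hQtf
      refine hUp _ (hcoker q) _ ?_
      intro a ha
      simp only [annIdeal, LinearMap.mem_ker, LinearMap.toSpanSingleton_apply]
      obtain ⟨m, hm⟩ := ha
      simp only [LinearMap.toSpanSingleton_apply] at hm
      have h1 : Ψ k (a • q) = Ψ' k (a • q) := by
        rw [← hm, hext k hk m, hext' k hk m]
      rw [hΨ k hk a q, hΨ' k hk a q] at h1
      have h2 : ∀ i ∈ Finset.range (k + 1), i ≠ 0 →
          Ω i a • Ψ (k - i) q = Ω i a • Ψ' (k - i) q := by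
        intro i hi hi0
        have : k - i < k := by simp only [Finset.mem_range] at hi; omega
        rw [ih (k - i) this (le_trans (Nat.sub_le k i) hk)]
      rw [smul_sub, sub_eq_zero]
      have e1 : ∑ i ∈ Finset.range (k + 1), Ω i a • Ψ (k - i) q
          = a • Ψ k q + ∑ i ∈ Finset.Ioo 0 (k+1), Ω i a • Ψ (k - i) q := by
        have h : Finset.range (k+1) = insert 0 (Finset.Ioo 0 (k+1)) := by
          ext x; simp only [Finset.mem_range, Finset.mem_insert, Finset.mem_Ioo]; omega
        rw [h, Finset.sum_insert (by simp)]
        simp [hΩ0]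
      have e2 : ∑ i ∈ Finset.range (k + 1), Ω i a • Ψ' (k - i) q
          = a • Ψ' k q + ∑ i ∈ Finset.Ioo 0 (k+1), Ω i a • Ψ' (k - i) q := by
        have h : Finset.range (k+1) = insert 0 (Finset.Ioo 0 (k+1)) := by
          ext x; simp only [Finset.mem_range, Finset.mem_insert, Finset.mem_Ioo]; omega
        rw [h, Finset.sum_insert (by simp)]
        simp [hΩ0]
      have e3 : ∑ i ∈ Finset.Ioo 0 (k+1), Ω i a • Ψ (k - i) q
          = ∑ i ∈ Finset.Ioo 0 (k+1), Ω i a • Ψ' (k - i) q := by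
        apply Finset.sum_congr rfl
        intro i hi
        simp only [Finset.mem_Ioo] at hi
        exact h2 i (Finset.mem_range.mpr hi.2) hi.1.ne'
      rw [e1, e2, e3] at h1
      exact add_right_cancel h1
    exact sub_eq_zero.mp hδ
end
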